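/- For all integers d ≥ 2 and 1 ≤ j ≤ k ≤ N, one has (1/N) ∑_{i=1}^N (i/N)^{1/d} (1 − i/N)^{k−j} ≤ 2 ∫_0^1 x^{1/d} (1 − x)^{k−j} dx = 2 B(1/d + 1, k − j + 1). -/

import Mathlib

open Finset intervalIntegral

/-- The Beta function `B(a,b) = ∫_0^1 x^{a-1} (1-x)^{b-1} dx`. -/
noncomputable def betaFun (a b : ℝ) : ℝ :=
  ∫ x in (0:ℝ)..1, x ^ (a - 1) * (1 - x) ^ (b - 1)

/-- Lemma 8.1 of the paper: Riemann-sum comparison with the Beta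
integral.  Here `i : Fin N` corresponds to the paper's 1-based index `i+1`. -/
theorem riemann_sum_beta_comparison
    (d j k N : ℕ) (hd : 2 ≤ d) (hj : 1 ≤ j) (hjk : j ≤ k) (hkN : k ≤ N) :
    ((1 / (N : ℝ)) * ∑ i : Fin N,
        (((i.1 : ℝ) + 1) / N) ^ ((1 : ℝ) / d) * (1 - ((i.1 : ℝ) + 1) / N) ^ (k - j) ≤
      2 * ∫ x in (0:ℝ)..1, x ^ ((1 : ℝ) / d) * (1 - x) ^ (k - j)) ∧
    (∫ x in (0:ℝ)..1, x ^ ((1 : ℝ) / d) * (1 - x) ^ (k - j)) =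
      betaFun ((1 : ℝ) / d + 1) (((k - j : ℕ) : ℝ) + 1) := by
  have hN : 0 < N := lt_of_lt_of_le (lt_of_lt_of_le hj hjk) hkN
  have hNR : (0:ℝ) < N := by exact_mod_cast hN
  set m : ℕ := k - j with hm
  set p : ℝ := (1:ℝ)/d with hpdef
  have hdR : (2:ℝ) ≤ d := by exact_mod_cast hd
  have hp0 : 0 < p := by positivity
  have hp1 : p ≤ 1 := by
    rw [hpdef, div_le_one (by linarith)]; linarith
  set f : ℝ → ℝ := fun x => x ^ p * (1 - x) ^ m with hf
  have hfc : Continuous f :=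
    (Real.continuous_rpow_const hp0.le).mul (by continuity)
  have hfint : ∀ a b : ℝ, IntervalIntegrable f MeasureTheory.volume a b :=
    fun a b => hfc.intervalIntegrable a b
  constructor
  · -- main inequality
    have key : ∀ i : ℕ, i < N →
        (1 / (N:ℝ)) * f (((i:ℝ)+1)/N) ≤
          2 * ∫ x in ((i:ℝ)/N)..(((i:ℝ)+1)/N), f x := by
      intro i hiN
      have hi1N : ((i:ℝ)+1) ≤ N := by exact_mod_cast Nat.succ_le_of_lt hiN
      have hab : ((i:ℝ)/N) ≤ ((i:ℝ)+1)/N :=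
        by gcongr ?_ / ?_ <;> linarith
      rcases Nat.eq_zero_or_pos i with rfl | hi
      · -- first interval
        have hc : (0:ℝ) < 1/N := by positivity
        have hc1 : (1:ℝ)/N ≤ 1 := by
          rw [div_le_one hNR]; exact_mod_cast hN
        set c : ℝ := 1/(N:ℝ) with hcdef
        set C : ℝ := (1 - c)^m with hCdef
        have hC0 : 0 ≤ C := pow_nonneg (by linarith) m
        have hgint : IntervalIntegrable (fun x : ℝ => x^p * C)
            MeasureTheory.volume 0 c :=
          ((Real.continuous_rpow_const hp0.le).mul continuous_const).intervalIntegrable _ _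
        have hmono : (∫ x in (0:ℝ)..c, x^p * C) ≤ ∫ x in (0:ℝ)..c, f x := by
          apply intervalIntegral.integral_mono_on hc.le hgint (hfint _ _)
          intro x hx
          have hx0 : 0 ≤ x := hx.1
          have hx1 : x ≤ c := hx.2
          have hCle : C ≤ (1-x)^m :=
            pow_le_pow_left₀ (by linarith) (by linarith) m
          exact mul_le_mul_of_nonneg_left hCle (Real.rpow_nonneg hx0 p)
        have hval : (∫ x in (0:ℝ)..c, x^p * C) = C * (c^(p+1)/(p+1)) := by
          rw [intervalIntegral.integral_mul_const,
            integral_rpow (Or.inl (by linarith : (-1:ℝ) < p)),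
            Real.zero_rpow (by linarith : p+1 ≠ 0)]
          ring
        have hpow : c ^ (p+1) = c^p * c := by
          rw [Real.rpow_add hc, Real.rpow_one]
        have h1 : c * f c ≤ 2 * ∫ x in (0:ℝ)..c, x^p * C := by
          rw [hval, show 2 * (C * (c^(p+1)/(p+1))) = (2/(p+1)) * (c^(p+1)*C) by ring,
            hpow]
          have hfc' : c * f c = c^p * c * C := by rw [hf]; ring
          rw [hfc']
          refine le_mul_of_one_le_left ?_ ?_
          · exact mul_nonneg (mul_nonneg (Real.rpow_nonneg hc.le p) hc.le) hC0
          · rw [le_div_iff₀ (by linarith)]; linarith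
        have hgoal : c * f c ≤ 2 * ∫ x in (0:ℝ)..c, f x := by linarith
        simpa [hcdef, one_div] using hgoal
      · -- later intervals
        have hiR : (1:ℝ) ≤ i := by exact_mod_cast hi
        set a : ℝ := (i:ℝ)/N with hadef
        set b : ℝ := ((i:ℝ)+1)/N with hbdef
        have hb1 : b ≤ 1 := by
          rw [hbdef, div_le_one hNR]; linarith
        have hptwise : ∀ x ∈ Set.Icc a b, f b ≤ 2 * f x := by
          intro x hx
          have hx0 : 0 ≤ x := le_trans (by positivity) hx.1
          have hxb : x ≤ b := hx.2
          have hb2x : b ≤ 2*x := by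
            have : ((i:ℝ)+1)/N ≤ 2*((i:ℝ)/N) := by
              rw [div_le_iff₀ hNR]
              have : 2*((i:ℝ)/N)*N = 2*(i:ℝ) := by field_simp
              rw [this]; linarith
            calc b ≤ 2*((i:ℝ)/N) := this
              _ ≤ 2*x := by linarith [hx.1]
          have h1 : b^p ≤ 2 * x^p := by
            calc b^p ≤ (2*x)^p :=
                  Real.rpow_le_rpow (by positivity) hb2x hp0.le
              _ = 2^p * x^p := Real.mul_rpow (by norm_num) hx0
              _ ≤ 2 * x^p := by
                  have h2p : (2:ℝ)^p ≤ 2 := by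
                    calc (2:ℝ)^p ≤ (2:ℝ)^(1:ℝ) :=
                          Real.rpow_le_rpow_of_exponent_le one_le_two hp1
                      _ = 2 := Real.rpow_one 2
                  exact mul_le_mul_of_nonneg_right h2p (Real.rpow_nonneg hx0 p)
          have h2 : (1-b)^m ≤ (1-x)^m :=
            pow_le_pow_left₀ (by linarith) (by linarith) m
          calc f b = b^p * (1-b)^m := rfl
            _ ≤ (2 * x^p) * (1-x)^m := by
                apply mul_le_mul h1 h2 (pow_nonneg (by linarith) m)
                positivity
            _ = 2 * f x := by rw [hf]; ring
        have hconst : (1/(N:ℝ)) * f b = ∫ _ in a..b, f b := by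
          rw [intervalIntegral.integral_const, smul_eq_mul]
          congr 1
          rw [hbdef, hadef]; ring
        have h2fint : IntervalIntegrable (fun x => 2 * f x)
            MeasureTheory.volume a b :=
          (continuous_const.mul hfc).intervalIntegrable _ _
        calc (1/(N:ℝ)) * f b = ∫ _ in a..b, f b := hconst
          _ ≤ ∫ x in a..b, 2 * f x :=
              intervalIntegral.integral_mono_on hab
                (intervalIntegrable_const) h2fint hptwise
          _ = 2 * ∫ x in a..b, f x := intervalIntegral.integral_const_mul 2 f
    calc (1 / (N : ℝ)) * ∑ i : Fin N, f (((i.1:ℝ)+1)/N)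
        = ∑ i ∈ Finset.range N, (1/(N:ℝ)) * f (((i:ℝ)+1)/N) := by
          rw [Finset.mul_sum]
          exact Fin.sum_univ_eq_sum_range (fun i => 1/(N:ℝ) * f (((i:ℝ)+1)/N)) N
      _ ≤ ∑ i ∈ Finset.range N, 2 * ∫ x in ((i:ℝ)/N)..(((i:ℝ)+1)/N), f x := by
          apply Finset.sum_le_sum
          intro i hi
          exact key i (Finset.mem_range.mp hi)
      _ = 2 * ∑ i ∈ Finset.range N, ∫ x in ((i:ℝ)/N)..(((i:ℝ)+1)/N), f x := by
          rw [Finset.mul_sum]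
      _ = 2 * ∫ x in (0:ℝ)..1, f x := by
          congr 1
          have := intervalIntegral.sum_integral_adjacent_intervals
            (a := fun i : ℕ => (i:ℝ)/N) (n := N)
            (f := f) (μ := MeasureTheory.volume) (fun i _ => hfint _ _)
          simp only [Nat.cast_zero, zero_div, Nat.cast_succ] at this ⊢
          rw [this, div_self hNR.ne']
  · -- beta identity
    unfold betaFun
    apply intervalIntegral.integral_congr
    intro x _
    simp only
    rw [add_sub_cancel_right, add_sub_cancel_right, Real.rpow_natCast]
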